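/- Let k ≥ 3, let ρ be an h-ary central relation and σ an s-ary central relation on E_k with 2 ≤ s < h. If Pol{ρ,σ} is maximal in Pol ρ, then σ is of type IV, i.e., C_ρ ∩ C_σ ≠ ∅. -/

import Mathlib

/-- The set of finitary operations on `Fin k` (all arities). -/
abbrev Op (k : ℕ) := Σ n : ℕ, ((Fin n → Fin k) → Fin k)

/-- An `n`-ary operation `f` preserves an `h`-ary relation `ρ`. -/
def Preserves {k n h : ℕ} (f : (Fin n → Fin k) → Fin k)
    (ρ : Set (Fin h → Fin k)) : Prop :=
  ∀ a : Fin h → Fin n → Fin k,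
    (∀ i : Fin n, (fun j => a j i) ∈ ρ) → (fun j => f (a j)) ∈ ρ

/-- An `n`-ary operation preserves a unary relation (a subset of `Fin k`). -/
def PreservesU {k n : ℕ} (f : (Fin n → Fin k) → Fin k) (σ : Set (Fin k)) : Prop :=
  ∀ x : Fin n → Fin k, (∀ i, x i ∈ σ) → f x ∈ σ

/-- `Pol ρ` for a single `h`-ary relation. -/
def Pol1 {k h : ℕ} (ρ : Set (Fin h → Fin k)) : Set (Op k) :=
  {f | Preserves f.2 ρ}

/-- `Pol {ρ, σ}` for two relations of possibly different arities. -/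
def Pol2 {k h s : ℕ} (ρ : Set (Fin h → Fin k)) (σ : Set (Fin s → Fin k)) : Set (Op k) :=
  Pol1 ρ ∩ Pol1 σ

/-- `Pol σ` for a unary relation. -/
def PolU {k : ℕ} (σ : Set (Fin k)) : Set (Op k) :=
  {f | PreservesU f.2 σ}

/-- A clone: contains all projections and is closed under composition. -/
structure IsClone (k : ℕ) (C : Set (Op k)) : Prop where
  proj : ∀ (n : ℕ) (i : Fin n), (⟨n, fun x => x i⟩ : Op k) ∈ C
  comp : ∀ (n m : ℕ) (g : (Fin m → Fin k) → Fin k)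
      (f : Fin m → (Fin n → Fin k) → Fin k),
      (⟨m, g⟩ : Op k) ∈ C → (∀ i, (⟨n, f i⟩ : Op k) ∈ C) →
      (⟨n, fun x => g fun i => f i x⟩ : Op k) ∈ C

/-- `C` is maximal in `D`: `C ⊊ D` and no clone lies strictly between them. -/
def MaximalIn {k : ℕ} (C D : Set (Op k)) : Prop :=
  C ⊂ D ∧ ∀ E : Set (Op k), IsClone k E → ¬(C ⊂ E ∧ E ⊂ D)

/-- The clone generated by a set `F` of operations. -/
def CloneGen (k : ℕ) (F : Set (Op k)) : Set (Op k) :=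
  ⋂₀ {C : Set (Op k) | IsClone k C ∧ F ⊆ C}

/-- Totally reflexive: contains every tuple with a repeated entry. -/
def TotallyReflexive {k h : ℕ} (ρ : Set (Fin h → Fin k)) : Prop :=
  ∀ a : Fin h → Fin k, (∃ i j : Fin h, i ≠ j ∧ a i = a j) → a ∈ ρ

/-- Totally symmetric: invariant under all permutations of coordinates. -/
def TotallySymmetric {k h : ℕ} (ρ : Set (Fin h → Fin k)) : Prop :=
  ∀ a ∈ ρ, ∀ π : Equiv.Perm (Fin h), (a ∘ π) ∈ ρ

/-- The center of an `h`-ary relation: those `c` such that every tuple whose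
first coordinate is `c` belongs to the relation. -/
def Center {k h : ℕ} (ρ : Set (Fin h → Fin k)) : Set (Fin k) :=
  {c | ∀ a : Fin h → Fin k, (∀ i : Fin h, (i : ℕ) = 0 → a i = c) → a ∈ ρ}

/-- A central relation: totally reflexive, totally symmetric, with nonempty
proper center. -/
def IsCentralRel {k h : ℕ} (ρ : Set (Fin h → Fin k)) : Prop :=
  TotallyReflexive ρ ∧ TotallySymmetric ρ ∧ (Center ρ).Nonempty ∧ Center ρ ≠ Set.univ

/-- A unary central relation: a nonempty proper subset of `Fin k`. -/
def IsCentralU {k : ℕ} (σ : Set (Fin k)) : Prop :=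
  σ.Nonempty ∧ σ ≠ Set.univ

/-- `B` is a `ρ`-chain: `B^h ⊆ ρ`. -/
def RhoChain {k h : ℕ} (ρ : Set (Fin h → Fin k)) (B : Set (Fin k)) : Prop :=
  ∀ a : Fin h → Fin k, (∀ i, a i ∈ B) → a ∈ ρ

/-- A maximal `ρ`-chain. -/
def MaxRhoChain {k h : ℕ} (ρ : Set (Fin h → Fin k)) (B : Set (Fin k)) : Prop :=
  RhoChain ρ B ∧ ∀ D : Set (Fin k), RhoChain ρ D → B ⊆ D → B = D

/-- The arity-`h` tuple `(a, b, …, b)`; for `h = 2` this is the pair `(a, b)`. -/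
def pair2 {k : ℕ} (h : ℕ) (a b : Fin k) : Fin h → Fin k :=
  fun i => if (i : ℕ) = 0 then a else b

/-- Recasting an `s`-ary relation along an arity equality `s = h`. -/
def recast {k s h : ℕ} (e : s = h) (σ : Set (Fin s → Fin k)) :
    Set (Fin h → Fin k) :=
  {a | (fun i : Fin s => a (Fin.cast e i)) ∈ σ}

/-- Type I: `σ` is unary and `C_ρ ∩ σ ≠ ∅`. -/
def TypeI {k h s : ℕ} (ρ : Set (Fin h → Fin k)) (σ : Set (Fin s → Fin k)) : Prop :=
  s = 1 ∧ (Center ρ ∩ Center σ).Nonempty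

/-- Type II: `σ` unary, `h = 2`, `ρ = {(a,b) : ∃ u ∈ σ, (a,u) ∈ ρ ∧ (b,u) ∈ ρ}`,
and every maximal `ρ`-chain meets `σ`. -/
def TypeII {k h s : ℕ} (ρ : Set (Fin h → Fin k)) (σ : Set (Fin s → Fin k)) : Prop :=
  s = 1 ∧ h = 2 ∧
  (∀ a b : Fin k, pair2 h a b ∈ ρ ↔
      ∃ u ∈ Center σ, pair2 h a u ∈ ρ ∧ pair2 h b u ∈ ρ) ∧
  ∀ B : Set (Fin k), MaxRhoChain ρ B → (B ∩ Center σ).Nonempty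

/-- Type III: `s = h` and `ρ`, `σ` are comparable. -/
def TypeIII {k h s : ℕ} (ρ : Set (Fin h → Fin k)) (σ : Set (Fin s → Fin k)) : Prop :=
  ∃ e : s = h, recast e σ ⊂ ρ ∨ ρ ⊂ recast e σ

/-- Type IV: `2 ≤ s < h` and `C_ρ ∩ C_σ ≠ ∅`. -/
def TypeIV {k h s : ℕ} (ρ : Set (Fin h → Fin k)) (σ : Set (Fin s → Fin k)) : Prop :=
  2 ≤ s ∧ s < h ∧ (Center ρ ∩ Center σ).Nonempty

/-- Type V: `2 ≤ h < s` and `λ ⊊ σ`, where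
`λ = {(a_1,…,a_s) : (a_1,…,a_h) ∈ ρ}`. -/
def TypeV {k h s : ℕ} (ρ : Set (Fin h → Fin k)) (σ : Set (Fin s → Fin k)) : Prop :=
  2 ≤ h ∧ ∃ hlt : h < s,
    {a : Fin s → Fin k | (fun i : Fin h => a (Fin.castLE hlt.le i)) ∈ ρ} ⊂ σ

/-- Type I for a unary relation given as a subset of `Fin k`. -/
def TypeIU {k h : ℕ} (ρ : Set (Fin h → Fin k)) (σ : Set (Fin k)) : Prop :=
  (Center ρ ∩ σ).Nonempty

/-- Type II for a unary relation given as a subset of `Fin k`. -/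
def TypeIIU {k h : ℕ} (ρ : Set (Fin h → Fin k)) (σ : Set (Fin k)) : Prop :=
  h = 2 ∧
  (∀ a b : Fin k, pair2 h a b ∈ ρ ↔
      ∃ u ∈ σ, pair2 h a u ∈ ρ ∧ pair2 h b u ∈ ρ) ∧
  ∀ B : Set (Fin k), MaxRhoChain ρ B → (B ∩ σ).Nonempty


section CloneLemmas
variable {k : ℕ}

lemma isClone_pol1 {h : ℕ} (ρ : Set (Fin h → Fin k)) : IsClone k (Pol1 ρ) := by
  constructor
  · intro n i a ha
    exact ha i
  · intro n m g f hg hf a ha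
    exact hg (fun j i => f i (a j)) (fun i => hf i a ha)

lemma isClone_pol2 {h s : ℕ} (ρ : Set (Fin h → Fin k)) (σ : Set (Fin s → Fin k)) :
    IsClone k (Pol2 ρ σ) := by
  constructor
  · intro n i
    exact ⟨(isClone_pol1 ρ).proj n i, (isClone_pol1 σ).proj n i⟩
  · intro n m g f hg hf
    exact ⟨(isClone_pol1 ρ).comp n m g f hg.1 (fun i => (hf i).1),
           (isClone_pol1 σ).comp n m g f hg.2 (fun i => (hf i).2)⟩

end CloneLemmas

section Aux
variable {k : ℕ}

lemma mem_of_repeat {h : ℕ} {ρ : Set (Fin h → Fin k)} (hrefl : TotallyReflexive ρ)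
    {a : Fin h → Fin k} {i j : Fin h} (hij : i ≠ j) (hv : a i = a j) : a ∈ ρ :=
  hrefl a ⟨i, j, hij, hv⟩

lemma cons_mem_of_center {m : ℕ} {ρ : Set (Fin (m+1) → Fin k)} {c : Fin k}
    (hc : c ∈ Center ρ) (y : Fin m → Fin k) : Fin.cons c y ∈ ρ := by
  apply hc
  intro i hi
  have : i = 0 := Fin.ext hi
  subst this
  simp

lemma mem_of_center_coord {m : ℕ} {ρ : Set (Fin (m+1) → Fin k)}
    (hsym : TotallySymmetric ρ) {c : Fin k} (hc : c ∈ Center ρ)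
    {a : Fin (m+1) → Fin k} {j : Fin (m+1)} (ha : a j = c) : a ∈ ρ := by
  set π : Equiv.Perm (Fin (m+1)) := Equiv.swap 0 j with hπ
  have hb : (a ∘ π) ∈ ρ := by
    apply hc
    intro i hi
    have : i = 0 := Fin.ext hi
    subst this
    simp [hπ, Equiv.swap_apply_left, ha]
  have h2 := hsym _ hb π
  have heq : ((a ∘ π) ∘ π) = a := by
    funext x
    simp [hπ, Function.comp, Equiv.swap_apply_self]
  rwa [heq] at h2

lemma not_center {m : ℕ} {ρ : Set (Fin (m+1) → Fin k)} {c : Fin k}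
    (hc : c ∉ Center ρ) : ∃ a : Fin (m+1) → Fin k, a 0 = c ∧ a ∉ ρ := by
  simp only [Center, Set.mem_setOf_eq, not_forall] at hc
  obtain ⟨a, ha, hna⟩ := hc
  exact ⟨a, ha 0 rfl, hna⟩

lemma mem_center_of_cons {m : ℕ} {ρ : Set (Fin (m+1) → Fin k)} {c : Fin k}
    (hc : ∀ y : Fin m → Fin k, Fin.cons c y ∈ ρ) : c ∈ Center ρ := by
  intro a ha
  have : a = Fin.cons c (fun pos => a pos.succ) := by
    funext i
    refine Fin.cases ?_ ?_ i
    · simp [ha 0 rfl]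
    · intro pos; simp
  rw [this]
  exact hc _

lemma exists_repeat {n : ℕ} {B : Finset (Fin k)} (hcard : B.card < n)
    {z : Fin n → Fin k} (hz : ∀ j, z j ∈ B) : ∃ i j, i ≠ j ∧ z i = z j := by
  obtain ⟨x, -, y, -, hxy, he⟩ :=
    Finset.exists_ne_map_eq_of_card_lt_of_maps_to (s := (Finset.univ : Finset (Fin n)))
      (by simpa using hcard) (fun a _ => hz a)
  exact ⟨x, y, hxy, he⟩

end Aux

private lemma key {k s' h' : ℕ} (hs' : 0 < s') (hsh : s' < h')
    (ρ : Set (Fin (h'+1) → Fin k)) (σ : Set (Fin (s'+1) → Fin k))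
    (hρr : TotallyReflexive ρ) (hρs : TotallySymmetric ρ)
    (hσr : TotallyReflexive σ) (hσs : TotallySymmetric σ)
    {c₀ s₀ : Fin k} (hc₀ : c₀ ∈ Center ρ) (hs₀ : s₀ ∈ Center σ)
    (hdisj : ∀ x : Fin k, x ∈ Center ρ → x ∈ Center σ → False) :
    ∃ (t : ℕ) (δ : Set (Fin t → Fin k)),
      (Pol2 ρ σ ⊆ Pol2 ρ δ) ∧
      (∃ F ∈ Pol2 ρ δ, F ∉ Pol2 ρ σ) ∧
      (∃ G ∈ Pol1 ρ, G ∉ Pol2 ρ δ) := by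
  classical
  have hs₀C : s₀ ∉ Center ρ := fun h => hdisj s₀ h hs₀
  have hc₀S : c₀ ∉ Center σ := fun h => hdisj c₀ hc₀ h
  have hsc : s₀ ≠ c₀ := fun h => hs₀C (h ▸ hc₀)
  obtain ⟨A₀, hA₀0, hA₀⟩ := not_center hs₀C
  obtain ⟨b', hb'0, hb'⟩ := not_center hc₀S
  -- block index type
  set ι : Type := ((Fin s' → Fin k) × Fin s') ⊕ ((Fin h' → Fin k) × Fin h') with hι
  set t : ℕ := Fintype.card ι with ht
  set e : ι ≃ Fin t := Fintype.equivFin ι with he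
  set δ : Set (Fin t → Fin k) :=
    {a | ∃ u : Fin k,
      (∀ Y : Fin s' → Fin k,
        Fin.cons u (fun pos => a (e (Sum.inl (Y, pos)))) ∈ σ) ∧
      (∀ X : Fin h' → Fin k,
        Fin.cons u (fun pos => a (e (Sum.inr (X, pos)))) ∈ ρ)} with hδdef
  refine ⟨t, δ, ?_, ?_, ?_⟩
  · -- Pol2 ρ σ ⊆ Pol2 ρ δ
    rintro ⟨n, fn⟩ ⟨hfρ', hfσ'⟩
    have hfρ : Preserves fn ρ := hfρ'
    have hfσ : Preserves fn σ := hfσ'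
    refine ⟨hfρ', ?_⟩
    show Preserves fn δ
    intro a ha
    choose U hY hX using ha
    refine ⟨fn U, ?_, ?_⟩
    · intro Y
      have hM : (fun jj : Fin (s'+1) => fn (fun i =>
            (Fin.cons (U i) (fun pos => a (e (Sum.inl (Y, pos))) i) : Fin (s'+1) → Fin k) jj)) ∈ σ :=
        hfσ (fun (jj : Fin (s'+1)) (i : Fin n) =>
          (Fin.cons (U i) (fun pos => a (e (Sum.inl (Y, pos))) i) : Fin (s'+1) → Fin k) jj)
          (fun i => hY i Y)
      have heq : (Fin.cons (fn U)
          (fun pos => (fun j => fn (a j)) (e (Sum.inl (Y, pos))))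
          : Fin (s'+1) → Fin k) =
          fun jj => fn (fun i =>
            (Fin.cons (U i) (fun pos => a (e (Sum.inl (Y, pos))) i) : Fin (s'+1) → Fin k) jj) := by
        funext jj
        refine Fin.cases ?_ ?_ jj
        · simp
        · intro pos; simp
      exact heq ▸ hM
    · intro X
      have hM : (fun jj : Fin (h'+1) => fn (fun i =>
            (Fin.cons (U i) (fun pos => a (e (Sum.inr (X, pos))) i) : Fin (h'+1) → Fin k) jj)) ∈ ρ :=
        hfρ (fun (jj : Fin (h'+1)) (i : Fin n) =>
          (Fin.cons (U i) (fun pos => a (e (Sum.inr (X, pos))) i) : Fin (h'+1) → Fin k) jj)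
          (fun i => hX i X)
      have heq : (Fin.cons (fn U)
          (fun pos => (fun j => fn (a j)) (e (Sum.inr (X, pos))))
          : Fin (h'+1) → Fin k) =
          fun jj => fn (fun i =>
            (Fin.cons (U i) (fun pos => a (e (Sum.inr (X, pos))) i) : Fin (h'+1) → Fin k) jj) := by
        funext jj
        refine Fin.cases ?_ ?_ jj
        · simp
        · intro pos; simp
      exact heq ▸ hM
  · -- F : the b'-retraction
    have hb'S : ∀ j, b' j ≠ s₀ := by
      intro j hj
      exact hb' (mem_of_center_coord hσs hs₀ hj)
    set B' : Finset (Fin k) := Finset.image b' Finset.univ with hB'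
    have hc₀B' : c₀ ∈ B' := by
      rw [hB']
      exact Finset.mem_image.2 ⟨0, Finset.mem_univ _, hb'0⟩
    have hB'card : B'.card ≤ s' + 1 := by
      calc B'.card ≤ (Finset.univ : Finset (Fin (s'+1))).card := Finset.card_image_le
      _ = s' + 1 := by simp
    set f0 : Fin k → Fin k := fun x => if x ∈ B' then x else c₀ with hf0
    have hf0B : ∀ x, f0 x ∈ B' := by
      intro x
      rw [hf0]
      by_cases hx : x ∈ B' <;> simp [hx, hc₀B']
    have hρB : ∀ z : Fin (h'+1) → Fin k, (∀ j, z j ∈ B') → z ∈ ρ := by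
      intro z hz
      obtain ⟨i, j, hij, hv⟩ := exists_repeat (lt_of_le_of_lt hB'card (by omega)) hz
      exact mem_of_repeat hρr hij hv
    have hδB : ∀ z : Fin t → Fin k, (∀ l, z l ∈ B') → z ∈ δ := by
      intro z hz
      refine ⟨s₀, fun Y => cons_mem_of_center hs₀ _, ?_⟩
      intro X
      by_cases hcc : ∃ pos, z (e (Sum.inr (X, pos))) = c₀
      · obtain ⟨pos, hpos⟩ := hcc
        refine mem_of_center_coord hρs hc₀ (j := pos.succ) ?_
        simpa using hpos
      · push_neg at hcc
        have hz' : ∀ pos : Fin h', z (e (Sum.inr (X, pos))) ∈ B'.erase c₀ :=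
          fun pos => Finset.mem_erase.2 ⟨hcc pos, hz _⟩
        have hcard2 : (B'.erase c₀).card < h' := by
          have := Finset.card_erase_of_mem hc₀B'
          omega
        obtain ⟨p1, p2, hpp, hvv⟩ := exists_repeat hcard2 hz'
        refine mem_of_repeat hρr (i := p1.succ) (j := p2.succ)
          (fun hc => hpp (Fin.succ_injective _ hc)) ?_
        simpa using hvv
    refine ⟨⟨1, fun x => f0 (x 0)⟩, ⟨?_, ?_⟩, ?_⟩
    · intro a _
      exact hρB _ (fun j => hf0B _)
    · intro a _
      exact hδB _ (fun l => hf0B _)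
    · rintro ⟨-, hFσ⟩
      have hFσ' : Preserves (fun x : Fin 1 → Fin k => f0 (x 0)) σ := hFσ
      set atup : Fin (s'+1) → Fin k := Fin.cons s₀ (fun pos => b' pos.succ) with hatup
      have hcols : ∀ i : Fin 1, (fun j => atup j) ∈ σ :=
        fun _ => cons_mem_of_center hs₀ _
      have hmem := hFσ' (fun j _ => atup j) hcols
      have hout : (fun j => f0 ((fun _ : Fin 1 => atup j) 0)) = b' := by
        funext j
        refine Fin.cases ?_ ?_ j
        · have hs₀B : s₀ ∉ B' := by
            rw [hB']
            simp only [Finset.mem_image, Finset.mem_univ, true_and, not_exists]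
            intro l hl
            exact hb'S l hl
          simp [hatup, hf0, hs₀B, hb'0]
        · intro pos
          have hmemB : b' pos.succ ∈ B' :=
            Finset.mem_image.2 ⟨pos.succ, Finset.mem_univ _, rfl⟩
          simp [hatup, hf0, hmemB]
      rw [hout] at hmem
      exact hb' hmem
  · -- G
    have hh' : 0 < h' := hs'.trans hsh
    have hmbar : (fun _ : Fin t => c₀) ∈ δ := by
      refine ⟨s₀, fun Y => cons_mem_of_center hs₀ _, ?_⟩
      intro X
      exact mem_of_center_coord hρs hc₀ (j := Fin.succ (⟨0, hh'⟩ : Fin h'))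
        (Fin.cons_succ _ _ _)
    set φ : (Fin t → Fin k) → (Fin t → Fin k) :=
      fun m => if m ∈ δ then m else (fun _ => c₀) with hφ
    have hφδ : ∀ m, φ m ∈ δ := by
      intro m; rw [hφ]; by_cases hm : m ∈ δ <;> simp [hm, hmbar]
    have hφid : ∀ m ∈ δ, φ m = m := by
      intro m hm; rw [hφ]; simp [hm]
    set ee : (Fin t → Fin k) ≃ Fin (k ^ t) := finFunctionFinEquiv with hee
    set row : Fin t → (Fin (k ^ t) → Fin k) := fun l c => φ (ee.symm c) l with hrow
    have hmsep : ∀ i : Fin t, (fun l => if l = i then s₀ else c₀) ∈ δ := by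
      intro i
      refine ⟨s₀, fun Y => cons_mem_of_center hs₀ _, ?_⟩
      intro X
      by_cases hcc : ∃ pos : Fin h',
          (if e (Sum.inr (X, pos)) = i then s₀ else c₀) = c₀
      · obtain ⟨pos, hpos⟩ := hcc
        exact mem_of_center_coord hρs hc₀ (j := pos.succ) (by simpa using hpos)
      · push_neg at hcc
        have hall : ∀ pos : Fin h',
            (if e (Sum.inr (X, pos)) = i then s₀ else c₀) = s₀ := by
          intro pos
          by_cases hif : e (Sum.inr (X, pos)) = i
          · simp [hif]
          · exact absurd (by simp [hif]) (hcc pos)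
        refine mem_of_repeat hρr (i := 0) (j := Fin.succ (⟨0, hh'⟩ : Fin h'))
          (Fin.succ_ne_zero _).symm ?_
        rw [Fin.cons_zero, Fin.cons_succ]
        exact (hall _).symm
    have hrowinj : Function.Injective row := by
      intro i j hij
      by_contra hne2
      have h1 := congrFun hij (ee (fun l => if l = i then s₀ else c₀))
      rw [hrow] at h1
      simp only [Equiv.symm_apply_apply] at h1
      rw [hφid _ (hmsep i)] at h1
      simp only [if_pos rfl] at h1
      rw [if_neg (Ne.symm hne2)] at h1
      exact hsc h1
    set β : Fin t → Fin k :=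
      fun l => Sum.elim (fun Yp : (Fin s' → Fin k) × Fin s' => Yp.1 Yp.2)
        (fun Xp : (Fin h' → Fin k) × Fin h' => Xp.1 Xp.2) (e.symm l) with hβ
    have hβY : ∀ (Y : Fin s' → Fin k) (pos : Fin s'),
        β (e (Sum.inl (Y, pos))) = Y pos := by
      intro Y pos; rw [hβ]; simp
    have hβX : ∀ (X : Fin h' → Fin k) (pos : Fin h'),
        β (e (Sum.inr (X, pos))) = X pos := by
      intro X pos; rw [hβ]; simp
    have hβδ : β ∉ δ := by
      rintro ⟨u, hYc, hXc⟩
      refine hdisj u ?_ ?_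
      · apply mem_center_of_cons
        intro y
        have h2 := hXc y
        have h3 : (fun pos => β (e (Sum.inr (y, pos)))) = y :=
          funext (fun pos => hβX y pos)
        rwa [h3] at h2
      · apply mem_center_of_cons
        intro y
        have h2 := hYc y
        have h3 : (fun pos => β (e (Sum.inl (y, pos)))) = y :=
          funext (fun pos => hβY y pos)
        rwa [h3] at h2
    have star : ∀ I : Fin (h'+1) → Fin t, Function.Injective I →
        ∃ m ∈ δ, (fun j => m (I j)) ∉ ρ := by
      intro I hInj
      have hmval : ∀ (fill : Fin k) (j : Fin (h'+1)),
          (fun l => if hl : ∃ j', I j' = l then A₀ hl.choose else fill) (I j)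
            = A₀ j := by
        intro fill j
        have hex : ∃ j', I j' = I j := ⟨j, rfl⟩
        simp only [dif_pos hex]
        congr 1
        exact hInj hex.choose_spec
      have hmρ2 : ∀ fill : Fin k,
          (fun j => (fun l => if hl : ∃ j', I j' = l then A₀ hl.choose else fill)
            (I j)) ∉ ρ := by
        intro fill
        have heq4 : (fun j => (fun l => if hl : ∃ j', I j' = l then A₀ hl.choose
            else fill) (I j)) = A₀ := funext (fun j => hmval fill j)
        rw [heq4]; exact hA₀
      by_cases hP : ∀ j : Fin (h'+1), j ≠ 0 →
          ∃ Xp : (Fin h' → Fin k) × Fin h', e.symm (I j) = Sum.inr Xp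
      · refine ⟨(fun l => if hl : ∃ j', I j' = l then A₀ hl.choose else c₀),
          ⟨c₀, ?_, fun X => cons_mem_of_center hc₀ _⟩, hmρ2 c₀⟩
        intro Y
        by_cases hvc : ∃ pos : Fin s',
            (fun l => if hl : ∃ j', I j' = l then A₀ hl.choose else c₀)
              (e (Sum.inl (Y, pos))) = c₀
        · obtain ⟨pos, hpos⟩ := hvc
          exact mem_of_repeat hσr (i := 0) (j := pos.succ)
            (Fin.succ_ne_zero _).symm (by simpa using hpos.symm)
        · push_neg at hvc
          have h4 := hvc ⟨0, hs'⟩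
          by_cases hex : ∃ j', I j' = e (Sum.inl (Y, (⟨0, hs'⟩ : Fin s')))
          · have hch : hex.choose = 0 := by
              by_contra hch0
              obtain ⟨Xp, hXp⟩ := hP hex.choose hch0
              rw [hex.choose_spec] at hXp
              simp at hXp
            have hv : (fun l => if hl : ∃ j', I j' = l then A₀ hl.choose else c₀)
                (e (Sum.inl (Y, (⟨0, hs'⟩ : Fin s')))) = s₀ := by
              simp only [dif_pos hex, hch, hA₀0]
            exact mem_of_center_coord hσs hs₀
              (j := (⟨0, hs'⟩ : Fin s').succ) (by rw [Fin.cons_succ]; exact hv)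
          · exact absurd (by simp [dif_neg hex]) h4
      · push_neg at hP
        obtain ⟨j₀, hj₀ne, hj₀⟩ := hP
        refine ⟨(fun l => if hl : ∃ j', I j' = l then A₀ hl.choose else s₀),
          ⟨s₀, fun Y => cons_mem_of_center hs₀ _, ?_⟩, hmρ2 s₀⟩
        intro X
        by_cases hvs : ∃ pos : Fin h',
            (fun l => if hl : ∃ j', I j' = l then A₀ hl.choose else s₀)
              (e (Sum.inr (X, pos))) = s₀
        · obtain ⟨pos, hpos⟩ := hvs
          exact mem_of_repeat hρr (i := 0) (j := pos.succ)
            (Fin.succ_ne_zero _).symm (by simpa using hpos.symm)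
        · push_neg at hvs
          exfalso
          have hFex : ∀ pos : Fin h',
              ∃ j', I j' = e (Sum.inr (X, pos)) ∧ j' ≠ 0 := by
            intro pos
            have h5 := hvs pos
            by_cases hex : ∃ j', I j' = e (Sum.inr (X, pos))
            · refine ⟨hex.choose, hex.choose_spec, ?_⟩
              intro hch0
              apply h5
              simp only [dif_pos hex, hch0, hA₀0]
            · exact absurd (by simp [dif_neg hex]) h5
          choose F hF1 hF2 using hFex
          have hFinj : Function.Injective F := by
            intro p1 p2 hpF
            have h6 := hF1 p1
            rw [hpF, hF1 p2] at h6
            have h7 := e.injective h6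
            have h9 : ((X, p2) : (Fin h' → Fin k) × Fin h') = (X, p1) :=
              Sum.inr.inj h7
            exact ((Prod.ext_iff.1 h9).2).symm
          have himg : (Finset.univ.image F : Finset (Fin (h'+1)))
              = Finset.univ.erase 0 := by
            apply Finset.eq_of_subset_of_card_le
            · intro x hx
              obtain ⟨pos, -, hpos⟩ := Finset.mem_image.1 hx
              exact Finset.mem_erase.2 ⟨hpos ▸ hF2 pos, Finset.mem_univ _⟩
            · rw [Finset.card_erase_of_mem (Finset.mem_univ _),
                Finset.card_image_of_injective _ hFinj]
              simp
          have hj₀img : j₀ ∈ (Finset.univ.image F : Finset (Fin (h'+1))) := by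
            rw [himg]
            exact Finset.mem_erase.2 ⟨hj₀ne, Finset.mem_univ _⟩
          obtain ⟨pos, -, hpos⟩ := Finset.mem_image.1 hj₀img
          have h8 := hF1 pos
          rw [hpos] at h8
          exact hj₀ (X, pos) (by rw [h8]; simp)
    refine ⟨⟨k ^ t, fun x => if hx : ∃ l, row l = x then β hx.choose else c₀⟩,
      ?_, ?_⟩
    · intro a ha
      by_cases hall : ∀ j, ∃ l, row l = a j
      · choose I hI using hall
        by_cases hinj : Function.Injective I
        · exfalso
          obtain ⟨mh, hmhδ, hmhρ⟩ := star I hinj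
          apply hmhρ
          have hcol := ha (ee mh)
          have heq2 : (fun j => a j (ee mh)) = fun j => mh (I j) := by
            funext j
            rw [← hI j, hrow]
            simp only [Equiv.symm_apply_apply]
            rw [hφid _ hmhδ]
          rwa [heq2] at hcol
        · simp only [Function.Injective, not_forall] at hinj
          obtain ⟨j1, j2, hIeq, hjne⟩ := hinj
          have haeq : a j1 = a j2 := by rw [← hI j1, ← hI j2, hIeq]
          refine mem_of_repeat hρr (i := j1) (j := j2) hjne ?_
          show (if hx : ∃ l, row l = a j1 then β hx.choose else c₀)
            = (if hx : ∃ l, row l = a j2 then β hx.choose else c₀)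
          rw [haeq]
      · push_neg at hall
        obtain ⟨j₀, hj₀⟩ := hall
        refine mem_of_center_coord hρs hc₀ (j := j₀) ?_
        show (if hx : ∃ l, row l = a j₀ then β hx.choose else c₀) = c₀
        rw [dif_neg]
        push_neg
        exact hj₀
    · rintro ⟨-, hGδ⟩
      have hGδ' : Preserves (fun x : Fin (k^t) → Fin k =>
        if hx : ∃ l, row l = x then β hx.choose else c₀) δ := hGδ
      have happ := hGδ' (fun l c => φ (ee.symm c) l) (fun c => hφδ (ee.symm c))
      apply hβδ
      have heq3 : (fun l => (if hx : ∃ l', row l' = (fun c => φ (ee.symm c) l)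
          then β hx.choose else c₀)) = β := by
        funext l
        have hex : ∃ l', row l' = (fun c => φ (ee.symm c) l) := ⟨l, by rw [hrow]⟩
        rw [dif_pos hex]
        congr 1
        exact hrowinj (by rw [hex.choose_spec, hrow])
      rwa [heq3] at happ


/-- Proposition 5 — for `2 ≤ s < h`, maximality forces type IV. -/
theorem typeIV_of_maximal {k h s : ℕ} (hk : 3 ≤ k) (hs : 2 ≤ s) (hsh : s < h)
    (ρ : Set (Fin h → Fin k)) (σ : Set (Fin s → Fin k))
    (hρ : IsCentralRel ρ) (hσ : IsCentralRel σ)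
    (hmax : MaximalIn (Pol2 ρ σ) (Pol1 ρ)) :
    (Center ρ ∩ Center σ).Nonempty := by
  by_contra hne
  obtain ⟨s', rfl⟩ : ∃ s', s = s' + 1 := ⟨s - 1, by omega⟩
  obtain ⟨h', rfl⟩ : ∃ h', h = h' + 1 := ⟨h - 1, by omega⟩
  obtain ⟨c₀, hc₀⟩ := hρ.2.2.1
  obtain ⟨s₀, hs₀⟩ := hσ.2.2.1
  have hdisj : ∀ x : Fin k, x ∈ Center ρ → x ∈ Center σ → False :=
    fun x h1 h2 => hne ⟨x, h1, h2⟩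
  obtain ⟨t, δ, hsub, ⟨F, hFδ, hFn⟩, ⟨G, hGρ, hGn⟩⟩ :=
    key (by omega) (by omega) ρ σ hρ.1 hρ.2.1 hσ.1 hσ.2.1 hc₀ hs₀ hdisj
  refine hmax.2 (Pol2 ρ δ) (isClone_pol2 ρ δ) ⟨?_, ?_⟩
  · rw [Set.ssubset_def]
    exact ⟨hsub, fun hsup => hFn (hsup hFδ)⟩
  · rw [Set.ssubset_def]
    exact ⟨fun f hf => hf.1, fun hsup => hGn (hsup hGρ)⟩
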